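/- Under the accelerated gradient method with step size 1/L on a convex differentiable function f with L-Lipschitz gradient, if the set of minimizers X̄ is nonempty with optimal value f̄, then f(x_k) - f̄ ≤ 2L·dist(x₀, X̄)²/(k+1)² for all k ≥ 1. -/

import Mathlib

open scoped RealInnerProductSpace Topology

lemma agr_line_deriv {E : Type*} [NormedAddCommGroup E] [InnerProductSpace ℝ E] [CompleteSpace E]
    (f : E → ℝ) (f' : E → E) (hdiff : ∀ x : E, HasGradientAt f (f' x) x)
    (u d : E) (t : ℝ) :
    HasDerivAt (fun s : ℝ => f (u + s • d)) ⟪f' (u + t • d), d⟫ t := by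
  have hc : HasDerivAt (fun s : ℝ => u + s • d) d t := by
    simpa using ((hasDerivAt_id t).smul_const d).const_add u
  have h := (hdiff (u + t • d)).hasFDerivAt.comp_hasDerivAt t hc
  simpa [Function.comp_def, InnerProductSpace.toDual_apply_apply] using h

lemma agr_convex_lower {E : Type*} [NormedAddCommGroup E] [InnerProductSpace ℝ E] [CompleteSpace E]
    (f : E → ℝ) (f' : E → E) (hconv : ConvexOn ℝ Set.univ f)
    (hdiff : ∀ x : E, HasGradientAt f (f' x) x) (u v : E) :
    f u + ⟪f' u, v - u⟫ ≤ f v := by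
  set g : ℝ → ℝ := fun s => f (u + s • (v - u)) with hg
  have hder : HasDerivAt g ⟪f' u, v - u⟫ 0 := by
    simpa using agr_line_deriv f f' hdiff u (v - u) 0
  have htend : Filter.Tendsto (slope g 0) (𝓝[>] 0) (𝓝 ⟪f' u, v - u⟫) :=
    (hasDerivAt_iff_tendsto_slope.mp hder).mono_left
      (nhdsWithin_mono 0 (fun t ht => ne_of_gt ht))
  have hbound : ∀ᶠ t in 𝓝[>] (0 : ℝ), slope g 0 t ≤ f v - f u := by
    filter_upwards [Ioo_mem_nhdsGT (by norm_num : (0:ℝ) < 1)] with t ht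
    have ht0 : 0 < t := ht.1
    have hcomb : g t ≤ (1 - t) * f u + t * f v := by
      have h := hconv.2 (Set.mem_univ u) (Set.mem_univ v)
        (by linarith [ht.2] : (0:ℝ) ≤ 1 - t) (le_of_lt ht0) (by ring)
      have : u + t • (v - u) = (1 - t) • u + t • v := by module
      simpa [hg, this] using h
    have : (g t - g 0) / (t - 0) ≤ f v - f u := by
      rw [sub_zero, div_le_iff₀ ht0]
      have hg0 : g 0 = f u := by simp [hg]
      rw [hg0]
      nlinarith
    simpa [slope_def_field, slope, vsub_eq_sub, div_eq_inv_mul] using this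
  have := le_of_tendsto htend hbound
  linarith

lemma agr_descent {E : Type*} [NormedAddCommGroup E] [InnerProductSpace ℝ E] [CompleteSpace E]
    (f : E → ℝ) (f' : E → E) (L : ℝ) (hL : 0 < L)
    (hdiff : ∀ x : E, HasGradientAt f (f' x) x)
    (hlip : ∀ x y : E, ‖f' x - f' y‖ ≤ L * ‖x - y‖) (u v : E) :
    f v ≤ f u + ⟪f' u, v - u⟫ + L / 2 * ‖v - u‖ ^ 2 := by
  set d : E := v - u with hd
  set a : ℝ := ⟪f' u, d⟫ with ha
  set c : ℝ := L / 2 * ‖d‖ ^ 2 with hc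
  set ψ : ℝ → ℝ := fun t => f u + t * a + c * t ^ 2 - f (u + t • d) with hψ
  have hderψ : ∀ t : ℝ, HasDerivAt ψ (a + c * (2 * t) - ⟪f' (u + t • d), d⟫) t := by
    intro t
    have h1 : HasDerivAt (fun t : ℝ => f u + t * a + c * t ^ 2) (a + c * (2 * t)) t := by
      have := (((hasDerivAt_id t).mul_const a).const_add (f u)).add
        ((hasDerivAt_pow 2 t).const_mul c)
      simpa [mul_comm, Pi.add_def] using this
    exact h1.sub (agr_line_deriv f f' hdiff u d t)
  have hdiffψ : Differentiable ℝ ψ := fun t => (hderψ t).differentiableAt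
  have hmono : MonotoneOn ψ (Set.Icc 0 1) := by
    apply monotoneOn_of_deriv_nonneg (convex_Icc 0 1) hdiffψ.continuous.continuousOn
      (hdiffψ.differentiableOn)
    intro t ht
    rw [interior_Icc] at ht
    rw [(hderψ t).deriv]
    have hip : ⟪f' (u + t • d) - f' u, d⟫ ≤ L * t * ‖d‖ ^ 2 := by
      calc ⟪f' (u + t • d) - f' u, d⟫ ≤ ‖f' (u + t • d) - f' u‖ * ‖d‖ :=
            real_inner_le_norm _ _
        _ ≤ (L * ‖(u + t • d) - u‖) * ‖d‖ := by
            have := hlip (u + t • d) u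
            exact mul_le_mul_of_nonneg_right this (norm_nonneg d)
        _ = L * t * ‖d‖ ^ 2 := by
            rw [add_sub_cancel_left, norm_smul, Real.norm_eq_abs, abs_of_pos ht.1]; ring
    have : ⟪f' (u + t • d), d⟫ = ⟪f' u, d⟫ + ⟪f' (u + t • d) - f' u, d⟫ := by
      rw [← inner_add_left, add_sub_cancel]
    rw [this]
    simp only [← ha, hc]
    nlinarith
  have h01 := hmono (Set.left_mem_Icc.mpr zero_le_one) (Set.right_mem_Icc.mpr zero_le_one)
    zero_le_one
  have hψ0 : ψ 0 = 0 := by simp [hψ]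
  have hψ1 : ψ 1 = f u + a + c - f v := by simp [hψ, hd]
  rw [hψ0, hψ1] at h01
  simp only [ha, hc, hd] at h01 ⊢
  linarith

lemma agr_key {E : Type*} [NormedAddCommGroup E] [InnerProductSpace ℝ E] [CompleteSpace E]
    (f : E → ℝ) (f' : E → E) (L : ℝ) (hL : 0 < L)
    (hconv : ConvexOn ℝ Set.univ f)
    (hdiff : ∀ x : E, HasGradientAt f (f' x) x)
    (hlip : ∀ x y : E, ‖f' x - f' y‖ ≤ L * ‖x - y‖) (w z : E) :
    f (w - (1 / L) • f' w) ≤ f z + L / 2 * (‖w - z‖ ^ 2 - ‖w - (1 / L) • f' w - z‖ ^ 2) := by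
  have hL0 : L ≠ 0 := ne_of_gt hL
  set g : E := f' w with hg
  have h1 : f (w - (1 / L) • g) ≤ f w - 1 / (2 * L) * ‖g‖ ^ 2 := by
    have := agr_descent f f' L hL hdiff hlip w (w - (1 / L) • g)
    have he : w - (1 / L) • g - w = -((1 / L) • g) := by abel
    rw [he] at this
    rw [inner_neg_right, real_inner_smul_right, norm_neg, norm_smul, Real.norm_eq_abs,
      abs_of_pos (by positivity : (0:ℝ) < 1 / L)] at this
    calc f (w - (1 / L) • g) ≤ f w + -(1 / L * ⟪g, g⟫) + L / 2 * (1 / L * ‖g‖) ^ 2 := this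
      _ = f w - 1 / (2 * L) * ‖g‖ ^ 2 := by
          rw [real_inner_self_eq_norm_sq]; field_simp; ring
  have h2 : f w ≤ f z + ⟪g, w - z⟫ := by
    have := agr_convex_lower f f' hconv hdiff w z
    have : f w + -⟪g, w - z⟫ ≤ f z := by
      rw [← inner_neg_right]
      simpa [neg_sub] using this
    linarith
  have h3 : L / 2 * (‖w - z‖ ^ 2 - ‖w - (1 / L) • g - z‖ ^ 2)
      = ⟪g, w - z⟫ - 1 / (2 * L) * ‖g‖ ^ 2 := by
    have he : w - (1 / L) • g - z = (w - z) - (1 / L) • g := by abel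
    have hexp := norm_sub_sq_real (w - z) ((1 / L) • g)
    rw [real_inner_smul_right, norm_smul, Real.norm_eq_abs,
      abs_of_pos (by positivity : (0:ℝ) < 1 / L), real_inner_comm] at hexp
    rw [he, hexp]
    field_simp
    ring
  linarith

theorem accelerated_gradient_rate
    {E : Type*} [NormedAddCommGroup E] [InnerProductSpace ℝ E] [CompleteSpace E]
    (f : E → ℝ) (f' : E → E) (L : ℝ) (hL : 0 < L)
    (hconv : ConvexOn ℝ Set.univ f)
    (hdiff : ∀ x : E, HasGradientAt f (f' x) x)
    (hlip : ∀ x y : E, ‖f' x - f' y‖ ≤ L * ‖x - y‖)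
    (x y : ℕ → E) (θ : ℕ → ℝ)
    (hy0 : y 0 = x 0) (hθ0 : θ 0 = 1)
    (hx : ∀ k, x (k + 1) = y k - (1 / L) • f' (y k))
    (hθmem : ∀ k, θ (k + 1) ∈ Set.Ioo (0 : ℝ) 1)
    (hθrec : ∀ k, θ (k + 1) ^ 2 = θ k ^ 2 * (1 - θ (k + 1)))
    (hyrec : ∀ k, y (k + 1)
      = x (k + 1) + (θ (k + 1) * (1 - θ k) / θ k) • (x (k + 1) - x k))
    (Xbar : Set E) (hXbar : Xbar = {u : E | ∀ v : E, f u ≤ f v})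
    (hne : Xbar.Nonempty)
    (fbar : ℝ) (hfbar : fbar = ⨅ u : E, f u) :
    ∀ k : ℕ, 1 ≤ k →
      f (x k) - fbar ≤ 2 * L * Metric.infDist (x 0) Xbar ^ 2 / (k + 1) ^ 2 := by
  have hθpos : ∀ k, 0 < θ k := by
    intro k
    cases k with
    | zero => rw [hθ0]; exact one_pos
    | succ n => exact (hθmem n).1
  have hθz : ∀ k, θ k ≠ 0 := fun k => ne_of_gt (hθpos k)
  have hθle1 : ∀ k, θ k ≤ 1 := by
    intro k
    cases k with
    | zero => rw [hθ0]
    | succ n => exact le_of_lt (hθmem n).2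
  -- θ k ≤ 2 / (k + 2)
  have hθbd : ∀ k : ℕ, θ k ≤ 2 / ((k : ℝ) + 2) := by
    intro k
    induction k with
    | zero => rw [hθ0]; norm_num
    | succ n ih =>
      by_contra h
      push_neg at h
      have hn : (0:ℝ) ≤ (n:ℝ) := Nat.cast_nonneg n
      have h1 : 0 < θ (n+1) := (hθmem n).1
      have h2 : θ (n+1) < 1 := (hθmem n).2
      have hs : 0 < θ n := hθpos n
      have hrec := hθrec n
      have ha : θ n * ((n:ℝ) + 2) ≤ 2 := by
        rw [← le_div_iff₀ (by positivity)]; exact ih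
      have hb : 2 < θ (n+1) * ((n:ℝ) + 3) := by
        rw [← div_lt_iff₀ (by positivity)]
        push_cast at h
        calc 2 / ((n:ℝ) + 3) = 2 / ((n:ℝ) + 1 + 2) := by ring_nf
          _ < θ (n+1) := h
      nlinarith [sq_nonneg (θ n * ((n:ℝ)+2) - θ (n+1) * ((n:ℝ)+3)),
        mul_pos h1 hs, sq_nonneg (θ n - θ (n+1)), mul_pos (mul_pos h1 h1) hs,
        mul_le_mul ha ha (by positivity) (by norm_num)]
  -- minimizers
  have hmin : ∀ u ∈ Xbar, ∀ v : E, f u ≤ f v := by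
    rw [hXbar]; exact fun u hu => hu
  have hfbar_eq : ∀ u ∈ Xbar, fbar = f u := by
    intro u hu
    rw [hfbar]
    refine le_antisymm (ciInf_le ⟨f u, ?_⟩ u) (le_ciInf (hmin u hu))
    rintro b ⟨v, rfl⟩
    exact hmin u hu v
  -- core per-minimizer bound
  have core : ∀ xb ∈ Xbar, ∀ m : ℕ,
      f (x (m+1)) - f xb ≤ θ m ^ 2 * (L / 2 * ‖x 0 - xb‖ ^ 2) := by
    intro xb hxb
    set v : ℕ → E := fun k => x k + (θ k)⁻¹ • (y k - x k) with hv
    have hv0 : v 0 = x 0 := by simp [hv, hy0]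
    have hvrec : ∀ k, v (k+1) = x k + (θ k)⁻¹ • (x (k+1) - x k) := by
      intro k
      simp only [hv, hyrec k, add_sub_cancel_left, smul_smul]
      have hc : (θ (k+1))⁻¹ * (θ (k+1) * (1 - θ k) / θ k) = (1 - θ k) / θ k := by
        rw [mul_div_assoc, ← mul_assoc, inv_mul_cancel₀ (hθz (k+1)), one_mul]
      rw [hc]
      match_scalars <;> field_simp [hθz k] <;> ring
    have step : ∀ k, f (x (k+1)) - f xb + L/2 * (θ k ^ 2 * ‖v (k+1) - xb‖ ^ 2)
        ≤ (1 - θ k) * (f (x k) - f xb) + L/2 * (θ k ^ 2 * ‖v k - xb‖ ^ 2) := by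
      intro k
      set z : E := (1 - θ k) • x k + θ k • xb with hz
      have hconvz : f z ≤ (1 - θ k) * f (x k) + θ k * f xb :=
        hconv.2 (Set.mem_univ _) (Set.mem_univ _)
          (by linarith [hθle1 k]) (le_of_lt (hθpos k)) (by ring)
      have hkey := agr_key f f' L hL hconv hdiff hlip (y k) z
      rw [← hx k] at hkey
      have e1 : y k - z = θ k • (v k - xb) := by
        simp only [hz, hv]
        match_scalars <;> field_simp [hθz k] <;> ring
      have e2 : x (k+1) - z = θ k • (v (k+1) - xb) := by
        rw [hvrec k]
        simp only [hz]
        match_scalars <;> field_simp [hθz k] <;> ring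
      rw [e1, e2, norm_smul, norm_smul, Real.norm_eq_abs, abs_of_pos (hθpos k),
        mul_pow, mul_pow] at hkey
      linarith
    have energy : ∀ k, f (x (k+1)) - f xb + L/2 * (θ k ^ 2 * ‖v (k+1) - xb‖ ^ 2)
        ≤ θ k ^ 2 * (L / 2 * ‖x 0 - xb‖ ^ 2) := by
      intro k
      induction k with
      | zero =>
        have h := step 0
        rw [hθ0, hv0] at h
        rw [hθ0]
        simp only [one_pow, one_mul] at h ⊢
        linarith
      | succ n ih =>
        have h := step (n+1)
        rw [hθrec n] at h ⊢
        have hnn : (0:ℝ) ≤ 1 - θ (n+1) := by linarith [(hθmem n).2]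
        have hmul := mul_le_mul_of_nonneg_left ih hnn
        nlinarith [hmul, h]
    intro m
    have h := energy m
    have hpos : 0 ≤ L/2 * (θ m ^ 2 * ‖v (m+1) - xb‖ ^ 2) := by positivity
    linarith
  -- final assembly
  intro k hk
  obtain ⟨m, rfl⟩ : ∃ m, k = m + 1 := ⟨k - 1, (Nat.succ_pred_eq_of_pos hk).symm⟩
  have hδ0 : 0 ≤ f (x (m+1)) - fbar := by
    obtain ⟨xb, hxb⟩ := hne
    rw [hfbar_eq xb hxb]
    linarith [hmin xb hxb (x (m+1))]
  have per : ∀ xb ∈ Xbar,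
      (f (x (m+1)) - fbar) * ((m:ℝ) + 2) ^ 2 / (2 * L) ≤ dist (x 0) xb ^ 2 := by
    intro xb hxb
    have h1 := core xb hxb m
    rw [← hfbar_eq xb hxb] at h1
    have hb := hθbd m
    have hθsq : θ m ^ 2 ≤ 4 / ((m:ℝ) + 2) ^ 2 := by
      have := pow_le_pow_left₀ (le_of_lt (hθpos m)) hb 2
      calc θ m ^ 2 ≤ (2 / ((m:ℝ) + 2)) ^ 2 := this
        _ = 4 / ((m:ℝ) + 2) ^ 2 := by rw [div_pow]; norm_num
    rw [dist_eq_norm, div_le_iff₀ (by positivity : (0:ℝ) < 2 * L)]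
    have hm2 : (0:ℝ) < ((m:ℝ) + 2) ^ 2 := by positivity
    have hN : (0:ℝ) ≤ ‖x 0 - xb‖ ^ 2 := by positivity
    have h2 : θ m ^ 2 * (L / 2 * ‖x 0 - xb‖ ^ 2) ≤ 4 / ((m:ℝ)+2)^2 * (L / 2 * ‖x 0 - xb‖ ^ 2) := by
      apply mul_le_mul_of_nonneg_right hθsq (by positivity)
    have h3 : f (x (m+1)) - fbar ≤ 4 / ((m:ℝ)+2)^2 * (L / 2 * ‖x 0 - xb‖ ^ 2) := le_trans h1 h2
    have h4 := mul_le_mul_of_nonneg_right h3 (le_of_lt hm2)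
    calc (f (x (m+1)) - fbar) * ((m:ℝ)+2)^2 ≤ 4 / ((m:ℝ)+2)^2 * (L / 2 * ‖x 0 - xb‖ ^ 2) * ((m:ℝ)+2)^2 := h4
      _ = ‖x 0 - xb‖ ^ 2 * (2 * L) := by field_simp; ring
  set a : ℝ := (f (x (m+1)) - fbar) * ((m:ℝ) + 2) ^ 2 / (2 * L) with ha
  have ha0 : 0 ≤ a := by positivity
  have hsq : ∀ xb ∈ Xbar, Real.sqrt a ≤ dist (x 0) xb := by
    intro xb hxb
    calc Real.sqrt a ≤ Real.sqrt (dist (x 0) xb ^ 2) := Real.sqrt_le_sqrt (per xb hxb)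
      _ = dist (x 0) xb := Real.sqrt_sq dist_nonneg
  have hinf : Real.sqrt a ≤ Metric.infDist (x 0) Xbar := by
    by_contra h
    push_neg at h
    obtain ⟨xb, hxb, hlt⟩ := (Metric.infDist_lt_iff hne).mp h
    exact absurd hlt (not_lt.mpr (hsq xb hxb))
  have haD : a ≤ Metric.infDist (x 0) Xbar ^ 2 := by
    have h2 := pow_le_pow_left₀ (Real.sqrt_nonneg a) hinf 2
    rwa [Real.sq_sqrt ha0] at h2
  rw [ha, div_le_iff₀ (by positivity : (0:ℝ) < 2 * L)] at haD
  have hfin : f (x (m+1)) - fbar ≤ 2 * L * Metric.infDist (x 0) Xbar ^ 2 / ((m:ℝ) + 2) ^ 2 := by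
    rw [le_div_iff₀ (by positivity : (0:ℝ) < ((m:ℝ)+2)^2)]
    linarith
  have hcast : ((↑(m+1) : ℝ) + 1) = (m:ℝ) + 2 := by push_cast; ring
  rw [hcast]
  exact hfin
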